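/- arXiv:2010.14667 — 5 statements merged into one kernel-verified Lean document; each statement's English description precedes it below -/
import Mathlib

section
/- Let (X, 𝔪) be a measure space with 0 < 𝔪(X) < ∞, let n ≥ 2 be an integer, set χ = n/(n−1), and let B ≥ 1. Let u : X → [0,∞) be measurable with u ∈ L¹(𝔪), and suppose that for every real k ≥ 1 one has ‖u‖_{L^{kχ}(𝔪)} ≤ (B k²)^{1/k} ‖u‖_{L^{k}(𝔪)}. Then the essential supremum of u satisfies essSup u ≤ Bⁿ · χ^{2n(n−1)} · ‖u‖_{L¹(𝔪)}. -/
open MeasureTheory Real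

/-- Moser (Morse) iteration lemma: if the `L^{kχ}` norm of a nonnegative `L¹`
function is controlled by `(B k²)^{1/k}` times its `L^k` norm for all `k ≥ 1`,
with `χ = n/(n-1)`, then its essential supremum is bounded by
`Bⁿ · χ^{2n(n-1)} · ‖u‖_{L¹}`. -/
theorem moser_iteration
    {X : Type*} [MeasurableSpace X] (𝔪 : Measure X)
    (hpos : 0 < 𝔪 Set.univ) (hfin : 𝔪 Set.univ < ⊤)
    (n : ℕ) (hn : 2 ≤ n) (χ : ℝ) (hχ : χ = (n : ℝ) / ((n : ℝ) - 1))
    (B : ℝ) (hB : 1 ≤ B)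
    (u : X → ℝ) (hu : Measurable u) (hu0 : ∀ x, 0 ≤ u x)
    (huL1 : Integrable u 𝔪)
    (hiter : ∀ k : ℝ, 1 ≤ k →
      (∫ x, u x ^ (k * χ) ∂𝔪) ^ (1 / (k * χ)) ≤
        (B * k ^ 2) ^ (1 / k) * (∫ x, u x ^ k ∂𝔪) ^ (1 / k)) :
    essSup u 𝔪 ≤ B ^ n * χ ^ (2 * n * (n - 1)) * ∫ x, u x ∂𝔪 := by
  haveI : IsFiniteMeasure 𝔪 := ⟨hfin⟩
  have hn2 : (2:ℝ) ≤ (n:ℝ) := by exact_mod_cast hn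
  have hn1 : (1:ℝ) ≤ (n:ℝ) - 1 := by linarith
  have hχ1 : 1 < χ := by
    rw [hχ, lt_div_iff₀ (by linarith : (0:ℝ) < (n:ℝ) - 1)]
    linarith
  have hχ0 : (0:ℝ) < χ := lt_trans one_pos hχ1
  have hB0 : (0:ℝ) < B := lt_of_lt_of_le one_pos hB
  set r : ℝ := χ⁻¹ with hr
  have hr0 : 0 ≤ r := inv_nonneg.mpr hχ0.le
  have hr1 : r < 1 := inv_lt_one_of_one_lt₀ hχ1
  have hint0 : 0 ≤ ∫ x, u x ∂𝔪 := integral_nonneg hu0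
  set M : ℝ := B ^ n * χ ^ (2 * n * (n - 1)) * ∫ x, u x ∂𝔪 with hM
  have hM0 : 0 ≤ M :=
    mul_nonneg (mul_nonneg (pow_nonneg hB0.le _) (pow_nonneg hχ0.le _)) hint0
  rw [essSup_eq_sInf]
  by_cases hbdd : ∃ C : ℝ, 𝔪 {x | C < u x} = 0
  · obtain ⟨C, hC⟩ := hbdd
    have hCae : ∀ᵐ x ∂𝔪, u x ≤ C := by
      rw [ae_iff]; simpa [not_le] using hC
    set D : ℝ := max C 1 with hD
    have hD1 : (1:ℝ) ≤ D := le_max_right _ _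
    have hDae : ∀ᵐ x ∂𝔪, u x ≤ D := hCae.mono fun x hx => hx.trans (le_max_left _ _)
    -- integrability of all powers
    have hint : ∀ k : ℝ, 0 ≤ k → Integrable (fun x => u x ^ k) 𝔪 := by
      intro k hk
      refine Integrable.mono' (integrable_const (D ^ k))
        (Measurable.aestronglyMeasurable (by measurability)) ?_
      filter_upwards [hDae] with x hx
      rw [Real.norm_eq_abs, abs_of_nonneg (Real.rpow_nonneg (hu0 x) k)]
      exact Real.rpow_le_rpow (hu0 x) hx hk
    -- the main iteration
    have key : ∀ m : ℕ, (∫ x, u x ^ (χ ^ m) ∂𝔪) ^ (r ^ m) ≤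
        B ^ (∑ j ∈ Finset.range m, r ^ j) *
          χ ^ (2 * ∑ j ∈ Finset.range m, (j:ℝ) * r ^ j) * ∫ x, u x ∂𝔪 := by
      intro m
      induction m with
      | zero => simp [Real.rpow_one]
      | succ m ih =>
        have hχm1 : (1:ℝ) ≤ χ ^ m := one_le_pow₀ hχ1.le
        have hχm0 : (0:ℝ) < χ ^ m := lt_of_lt_of_le one_pos hχm1
        have h1 := hiter (χ ^ m) hχm1
        rw [← pow_succ] at h1
        have e1 : 1 / χ ^ (m+1) = r ^ (m+1) := by rw [hr, inv_pow, one_div]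
        have e2 : 1 / χ ^ m = r ^ m := by rw [hr, inv_pow, one_div]
        rw [e1, e2] at h1
        have e4 : ((m * 2 : ℕ) : ℝ) * r ^ m = 2 * ((m:ℝ) * r ^ m) := by
          push_cast; ring
        have e3 : (B * (χ ^ m) ^ 2) ^ (r ^ m)
            = B ^ (r ^ m) * χ ^ (2 * ((m:ℝ) * r ^ m)) := by
          rw [Real.mul_rpow hB0.le (by positivity), ← pow_mul,
            ← Real.rpow_natCast χ (m * 2), ← Real.rpow_mul hχ0.le, e4]
        rw [e3] at h1
        calc (∫ x, u x ^ (χ ^ (m+1)) ∂𝔪) ^ (r ^ (m+1))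
            ≤ B ^ (r ^ m) * χ ^ (2 * ((m:ℝ) * r ^ m)) *
                ((∫ x, u x ^ (χ ^ m) ∂𝔪) ^ (r ^ m)) := h1
          _ ≤ B ^ (r ^ m) * χ ^ (2 * ((m:ℝ) * r ^ m)) *
                (B ^ (∑ j ∈ Finset.range m, r ^ j) *
                  χ ^ (2 * ∑ j ∈ Finset.range m, (j:ℝ) * r ^ j) * ∫ x, u x ∂𝔪) := by
              refine mul_le_mul_of_nonneg_left ih ?_
              positivity
          _ = B ^ (∑ j ∈ Finset.range (m+1), r ^ j) *
                χ ^ (2 * ∑ j ∈ Finset.range (m+1), (j:ℝ) * r ^ j) * ∫ x, u x ∂𝔪 := by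
              rw [Finset.sum_range_succ, Finset.sum_range_succ, mul_add,
                Real.rpow_add hB0, Real.rpow_add hχ0]
              ring
    -- bounds on the exponent sums
    have hn0 : (0:ℝ) < (n:ℝ) := by linarith
    have hrval : r = ((n:ℝ) - 1) / (n:ℝ) := by rw [hr, hχ, inv_div]
    have h1r : 1 - r = 1 / (n:ℝ) := by
      rw [hrval]; field_simp; ring
    have habs : ‖r‖ < 1 := by
      rw [Real.norm_eq_abs, abs_of_nonneg hr0]; exact hr1
    have hsum1 : Summable fun j : ℕ => r ^ j := summable_geometric_of_lt_one hr0 hr1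
    have hsum2 : Summable fun j : ℕ => (j:ℝ) * r ^ j :=
      (hasSum_coe_mul_geometric_of_norm_lt_one habs).summable
    have hS : ∀ m : ℕ, ∑ j ∈ Finset.range m, r ^ j ≤ (n:ℝ) := by
      intro m
      calc ∑ j ∈ Finset.range m, r ^ j ≤ ∑' j : ℕ, r ^ j :=
            Summable.sum_le_tsum _ (fun i _ => pow_nonneg hr0 i) hsum1
        _ = (1 - r)⁻¹ := tsum_geometric_of_lt_one hr0 hr1
        _ = (n:ℝ) := by rw [h1r, one_div, inv_inv]
    have hT : ∀ m : ℕ, ∑ j ∈ Finset.range m, (j:ℝ) * r ^ j ≤ (n:ℝ) * ((n:ℝ) - 1) := by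
      intro m
      calc ∑ j ∈ Finset.range m, (j:ℝ) * r ^ j ≤ ∑' j : ℕ, (j:ℝ) * r ^ j :=
            Summable.sum_le_tsum _ (fun i _ => mul_nonneg (Nat.cast_nonneg i) (pow_nonneg hr0 i)) hsum2
        _ = r / (1 - r) ^ 2 := tsum_coe_mul_geometric_of_norm_lt_one habs
        _ = (n:ℝ) * ((n:ℝ) - 1) := by
            rw [h1r, hrval]; field_simp
    have hcast : ((2 * n * (n - 1) : ℕ) : ℝ) = 2 * (n:ℝ) * ((n:ℝ) - 1) := by
      rw [Nat.cast_mul, Nat.cast_mul, Nat.cast_sub (by omega : 1 ≤ n)]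
      norm_num
    have keyM : ∀ m : ℕ, (∫ x, u x ^ (χ ^ m) ∂𝔪) ^ (r ^ m) ≤ M := by
      intro m
      refine (key m).trans ?_
      rw [hM, ← Real.rpow_natCast B n, ← Real.rpow_natCast χ (2 * n * (n - 1))]
      have g1 : B ^ (∑ j ∈ Finset.range m, r ^ j) ≤ B ^ ((n:ℕ):ℝ) :=
        Real.rpow_le_rpow_of_exponent_le hB (hS m)
      have g2 : χ ^ (2 * ∑ j ∈ Finset.range m, (j:ℝ) * r ^ j)
          ≤ χ ^ (((2 * n * (n - 1) : ℕ)):ℝ) := by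
        refine Real.rpow_le_rpow_of_exponent_le hχ1.le ?_
        rw [hcast]
        have := hT m
        linarith
      have hg2 : (0:ℝ) ≤ χ ^ (2 * ∑ j ∈ Finset.range m, (j:ℝ) * r ^ j) :=
        Real.rpow_nonneg hχ0.le _
      have hg1 : (0:ℝ) ≤ B ^ ((n:ℕ):ℝ) := Real.rpow_nonneg hB0.le _
      exact mul_le_mul_of_nonneg_right
        (mul_le_mul g1 g2 hg2 hg1) hint0
    -- every t > M bounds u a.e.
    have hmem : ∀ t : ℝ, M < t → 𝔪 {x | t < u x} = 0 := by
      intro t ht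
      by_contra hA
      have htpos : 0 < t := lt_of_le_of_lt hM0 ht
      set A := {x | t < u x} with hAdef
      have hAmeas : MeasurableSet A := measurableSet_lt measurable_const hu
      have hAfin : 𝔪 A < ⊤ := lt_of_le_of_lt (measure_mono (Set.subset_univ A)) hfin
      set ε := (𝔪 A).toReal with hε
      have hε0 : 0 < ε := ENNReal.toReal_pos hA hAfin.ne
      have hone : ∀ m : ℕ, χ ^ m * r ^ m = 1 := by
        intro m
        rw [hr, ← mul_pow, mul_inv_cancel₀ (ne_of_gt hχ0), one_pow]
      have hlow : ∀ m : ℕ, t * ε ^ (r ^ m) ≤ M := by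
        intro m
        have h2 : t ^ (χ ^ m) * ε ≤ ∫ x, u x ^ (χ ^ m) ∂𝔪 := by
          have hi : ∫ x, A.indicator (fun _ => t ^ (χ ^ m)) x ∂𝔪 = t ^ (χ ^ m) * ε := by
            rw [integral_indicator_const _ hAmeas, smul_eq_mul, mul_comm]; rfl
          rw [← hi]
          refine integral_mono ((integrable_const _).indicator hAmeas)
            (hint _ (by positivity)) ?_
          intro x
          by_cases hx : x ∈ A
          · simpa [Set.indicator_of_mem hx] using
              Real.rpow_le_rpow htpos.le (le_of_lt hx) (by positivity)
          · simpa [Set.indicator_of_notMem hx] using Real.rpow_nonneg (hu0 x) (χ ^ m)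
        have h3 : (t ^ (χ ^ m) * ε) ^ (r ^ m) ≤ (∫ x, u x ^ (χ ^ m) ∂𝔪) ^ (r ^ m) :=
          Real.rpow_le_rpow (by positivity) h2 (pow_nonneg hr0 m)
        have h4 : (t ^ (χ ^ m) * ε) ^ (r ^ m) = t * ε ^ (r ^ m) := by
          rw [Real.mul_rpow (Real.rpow_nonneg htpos.le _) hε0.le,
            ← Real.rpow_mul htpos.le, hone m, Real.rpow_one]
        calc t * ε ^ (r ^ m) = (t ^ (χ ^ m) * ε) ^ (r ^ m) := h4.symm
          _ ≤ (∫ x, u x ^ (χ ^ m) ∂𝔪) ^ (r ^ m) := h3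
          _ ≤ M := keyM m
      have h5 : Filter.Tendsto (fun m : ℕ => r ^ m) Filter.atTop (nhds 0) :=
        tendsto_pow_atTop_nhds_zero_of_lt_one hr0 hr1
      have h6 : Filter.Tendsto (fun m : ℕ => ε ^ (r ^ m)) Filter.atTop (nhds 1) := by
        have hc := (Real.continuousAt_const_rpow (a := ε) (b := 0) hε0.ne').tendsto.comp h5
        simpa [Function.comp_def] using hc
      have htend : Filter.Tendsto (fun m : ℕ => t * ε ^ (r ^ m)) Filter.atTop (nhds t) := by
        have := h6.const_mul t
        simpa using this
      have : t ≤ M := le_of_tendsto htend (Filter.Eventually.of_forall hlow)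
      linarith
    -- conclude
    have hbb : BddBelow {a : ℝ | 𝔪 {x | a < u x} = 0} := by
      refine ⟨0, fun a ha => ?_⟩
      by_contra h
      push_neg at h
      simp only [Set.mem_setOf_eq] at ha
      have huniv : {x | a < u x} = Set.univ :=
        Set.eq_univ_of_forall fun x => lt_of_lt_of_le h (hu0 x)
      rw [huniv] at ha
      exact absurd ha (ne_of_gt hpos)
    by_contra hcon
    push_neg at hcon
    have ht1 : M < (M + sInf {a : ℝ | 𝔪 {x | a < u x} = 0}) / 2 := by linarith
    have ht2 : sInf {a : ℝ | 𝔪 {x | a < u x} = 0}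
        ≤ (M + sInf {a : ℝ | 𝔪 {x | a < u x} = 0}) / 2 :=
      csInf_le hbb (hmem _ ht1)
    linarith
  · have hempty : {a : ℝ | 𝔪 {x | a < u x} = 0} = ∅ := by
      rw [Set.eq_empty_iff_forall_notMem]
      intro a ha
      exact hbdd ⟨a, ha⟩
    rw [hempty, Real.sInf_empty]
    exact hM0
end

section
/- Let (X, ν) be a measure space with 0 < ν(X) < ∞, let n ≥ 2 and n₁ ≥ 1 be integers, and let C ≥ 1, 0 < ε ≤ 1, A > 0 be real constants. Let u : X → [0,∞) be measurable with ∫_X u dν = A ε^{2n₁}, and suppose that for every real k ≥ 1 one has ‖u‖_{L^{kn/(n−1)}(ν)} ≤ C^{1/k} · ε^{−2n₁/(kn)} · k^{2/k} · ‖u‖_{L^{k}(ν)}. Then essSup u ≤ Cⁿ · (n/(n−1))^{2n(n−1)} · A. -/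
open MeasureTheory Real Filter

/-- The ε-scaled Moser iteration: if `∫ u = A ε^{2n₁}` and the `L^{kn/(n-1)}`
norm of `u` is bounded by `C^{1/k} ε^{-2n₁/(kn)} k^{2/k}` times its `L^k` norm
for all `k ≥ 1`, then `essSup u ≤ Cⁿ (n/(n-1))^{2n(n-1)} A`. -/
theorem eps_scaled_moser_iteration
    {X : Type*} [MeasurableSpace X] (ν : Measure X)
    (hpos : 0 < ν Set.univ) (hfin : ν Set.univ < ⊤)
    (n n₁ : ℕ) (hn : 2 ≤ n) (hn₁ : 1 ≤ n₁)
    (C ε A : ℝ) (hC : 1 ≤ C) (hε0 : 0 < ε) (hε1 : ε ≤ 1) (hA : 0 < A)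
    (u : X → ℝ) (hu : Measurable u) (hu0 : ∀ x, 0 ≤ u x)
    (huL1 : ∫ x, u x ∂ν = A * ε ^ (2 * n₁))
    (hiter : ∀ k : ℝ, 1 ≤ k →
      (∫ x, u x ^ (k * ((n : ℝ) / ((n : ℝ) - 1))) ∂ν) ^
          (1 / (k * ((n : ℝ) / ((n : ℝ) - 1)))) ≤
        C ^ (1 / k) * ε ^ (-(2 * (n₁ : ℝ)) / (k * n)) * k ^ (2 / k) *
          (∫ x, u x ^ k ∂ν) ^ (1 / k)) :
    essSup u ν ≤ C ^ n * ((n : ℝ) / ((n : ℝ) - 1)) ^ (2 * n * (n - 1)) * A := by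
  have hfM : IsFiniteMeasure ν := ⟨hfin⟩
  have hn2R : (2:ℝ) ≤ (n:ℝ) := by exact_mod_cast hn
  have hnpos : (0:ℝ) < n := by linarith
  have hC0 : (0:ℝ) < C := lt_of_lt_of_le one_pos hC
  set χ : ℝ := (n:ℝ) / ((n:ℝ) - 1) with hχdef
  have hχ1 : 1 < χ := by
    rw [hχdef, lt_div_iff₀ (by linarith)]
    linarith
  have hχ0 : (0:ℝ) < χ := lt_trans one_pos hχ1
  set y : ℝ := ((n:ℝ) - 1) / (n:ℝ) with hydef
  have hy0 : 0 ≤ y := by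
    apply div_nonneg <;> linarith
  have hy1 : y < 1 := by
    rw [hydef, div_lt_one hnpos]; linarith
  have hyχ : ∀ m : ℕ, y ^ m = 1 / χ ^ m := by
    intro m
    rw [hχdef, hydef, one_div, ← inv_pow, inv_div]
  have h1y : 1 - y = 1 / n := by
    rw [hydef]; field_simp; ring
  set S : ℕ → ℝ := fun m => ∑ j ∈ Finset.range m, y ^ j with hSdef
  set T : ℕ → ℝ := fun m => ∑ j ∈ Finset.range m, 2 * j * y ^ j with hTdef
  have hSsucc : ∀ m, S (m+1) = S m + y ^ m := fun m => Finset.sum_range_succ _ m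
  have hTsucc : ∀ m, T (m+1) = T m + 2 * m * y ^ m := fun m => Finset.sum_range_succ _ m
  have hgeom : Summable (fun j : ℕ => y ^ j) := summable_geometric_of_lt_one hy0 hy1
  have hSle : ∀ m, S m ≤ (n:ℝ) := by
    intro m
    have h1 := Summable.sum_le_tsum (Finset.range m) (fun j _ => pow_nonneg hy0 j) hgeom
    rw [tsum_geometric_of_lt_one hy0 hy1, h1y] at h1
    simpa using h1
  have hSnn : ∀ m, 0 ≤ S m := fun m =>
    Finset.sum_nonneg fun j _ => pow_nonneg hy0 j
  have hynorm : ‖y‖ < 1 := by rwa [Real.norm_eq_abs, abs_of_nonneg hy0]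
  have hsum2 : Summable (fun j : ℕ => (j:ℝ) * y ^ j) := by
    simpa using summable_pow_mul_geometric_of_norm_lt_one 1 hynorm
  have hTle : ∀ m, T m ≤ 2 * ((n:ℝ) * ((n:ℝ) - 1)) := by
    intro m
    have h1 : ∑ j ∈ Finset.range m, (j:ℝ) * y ^ j ≤ ∑' j : ℕ, (j:ℝ) * y ^ j :=
      Summable.sum_le_tsum (Finset.range m) (fun j _ => by positivity) hsum2
    rw [tsum_coe_mul_geometric_of_norm_lt_one hynorm, h1y] at h1
    have h2 : y / (1/(n:ℝ)) ^ 2 = (n:ℝ) * ((n:ℝ) - 1) := by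
      rw [hydef]; field_simp
    rw [h2] at h1
    have h3 : T m = 2 * ∑ j ∈ Finset.range m, (j:ℝ) * y ^ j := by
      rw [hTdef, Finset.mul_sum]
      exact Finset.sum_congr rfl fun j _ => by ring
    rw [h3]; linarith
  -- the main iteration
  have key : ∀ m : ℕ, (∫ x, u x ^ (χ ^ m) ∂ν) ^ (1 / χ ^ m) ≤
      C ^ (S m) * ε ^ (-(2 * (n₁:ℝ) / n) * S m) * χ ^ (T m) * (A * ε ^ (2 * n₁)) := by
    intro m
    induction m with
    | zero =>
      simp only [pow_zero, Real.rpow_one, hSdef, hTdef, Finset.range_zero,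
        Finset.sum_empty, mul_zero, Real.rpow_zero, one_mul, div_one, huL1]
      simp [huL1]
    | succ m ih =>
      have hk1 : 1 ≤ χ ^ m := one_le_pow₀ hχ1.le
      have hkpos : 0 < χ ^ m := pow_pos hχ0 m
      have H := hiter (χ ^ m) hk1
      rw [← pow_succ] at H
      refine H.trans ?_
      have hfac : (0:ℝ) ≤ C ^ (1/χ^m) * ε ^ (-(2 * (n₁:ℝ)) / (χ^m * n)) * (χ^m) ^ (2/χ^m) := by
        positivity
      calc C ^ (1/χ^m) * ε ^ (-(2 * (n₁:ℝ)) / (χ^m * n)) * (χ^m) ^ (2/χ^m) *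
            (∫ x, u x ^ (χ ^ m) ∂ν) ^ (1 / χ ^ m)
          ≤ C ^ (1/χ^m) * ε ^ (-(2 * (n₁:ℝ)) / (χ^m * n)) * (χ^m) ^ (2/χ^m) *
            (C ^ (S m) * ε ^ (-(2 * (n₁:ℝ) / n) * S m) * χ ^ (T m) * (A * ε ^ (2 * n₁))) :=
            mul_le_mul_of_nonneg_left ih hfac
        _ = C ^ (y^m) * ε ^ (-(2 * (n₁:ℝ) / n) * y^m) * χ ^ (2*(m:ℝ)*y^m) *
            (C ^ (S m) * ε ^ (-(2 * (n₁:ℝ) / n) * S m) * χ ^ (T m) * (A * ε ^ (2 * n₁))) := by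
            have e1 : 1/χ^m = y^m := (hyχ m).symm
            have e2 : -(2 * (n₁:ℝ)) / (χ^m * n) = -(2 * (n₁:ℝ) / n) * y^m := by
              rw [hyχ]
              field_simp
            have e3 : ((χ:ℝ)^m) ^ (2/χ^m) = χ ^ (2*(m:ℝ)*y^m) := by
              have e4 : 2*(m:ℝ)*y^m = (m:ℝ) * (2/χ^m) := by rw [hyχ]; ring
              rw [e4, Real.rpow_mul hχ0.le, Real.rpow_natCast]
            rw [e1, e2, e3]
        _ = C ^ (S (m+1)) * ε ^ (-(2 * (n₁:ℝ) / n) * S (m+1)) * χ ^ (T (m+1)) *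
            (A * ε ^ (2 * n₁)) := by
            rw [hSsucc, hTsucc, mul_add (-(2 * (n₁:ℝ) / n)), Real.rpow_add hC0,
              Real.rpow_add hε0, Real.rpow_add hχ0]
            ring
  -- the uniform bound
  set B : ℝ := C ^ n * χ ^ (2 * n * (n - 1)) * A with hBdef
  have hBpos : 0 < B := by
    rw [hBdef]
    positivity
  have key2 : ∀ m : ℕ, (∫ x, u x ^ (χ ^ m) ∂ν) ≤ B ^ ((χ : ℝ) ^ m) := by
    intro m
    have hkpos : 0 < χ ^ m := pow_pos hχ0 m
    have hInn : 0 ≤ ∫ x, u x ^ (χ ^ m) ∂ν :=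
      integral_nonneg fun x => Real.rpow_nonneg (hu0 x) _
    have h1 : C ^ (S m) ≤ C ^ ((n:ℝ)) := Real.rpow_le_rpow_of_exponent_le hC (hSle m)
    have h2 : ε ^ (-(2 * (n₁:ℝ) / n) * S m) ≤ ε ^ (-(2 * (n₁:ℝ))) := by
      apply Real.rpow_le_rpow_of_exponent_ge hε0 hε1
      have hmul := mul_le_mul_of_nonneg_left (hSle m) (by positivity : (0:ℝ) ≤ 2 * (n₁:ℝ) / n)
      have he : 2 * (n₁:ℝ) / n * n = 2 * (n₁:ℝ) := by field_simp
      nlinarith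
    have h3 : χ ^ (T m) ≤ χ ^ (2 * ((n:ℝ) * ((n:ℝ) - 1))) :=
      Real.rpow_le_rpow_of_exponent_le hχ1.le (hTle m)
    have hbd : C ^ (S m) * ε ^ (-(2 * (n₁:ℝ) / n) * S m) * χ ^ (T m) * (A * ε ^ (2 * n₁)) ≤ B := by
      have hstep : C ^ (S m) * ε ^ (-(2 * (n₁:ℝ) / n) * S m) * χ ^ (T m) * (A * ε ^ (2 * n₁)) ≤
          C ^ ((n:ℝ)) * ε ^ (-(2 * (n₁:ℝ))) * χ ^ (2 * ((n:ℝ) * ((n:ℝ) - 1))) *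
            (A * ε ^ (2 * n₁)) := by
        have p1 : (0:ℝ) ≤ C ^ (S m) := (Real.rpow_pos_of_pos hC0 _).le
        have p2 : (0:ℝ) ≤ ε ^ (-(2 * (n₁:ℝ) / n) * S m) := (Real.rpow_pos_of_pos hε0 _).le
        have p3 : (0:ℝ) ≤ χ ^ (T m) := (Real.rpow_pos_of_pos hχ0 _).le
        have p4 : (0:ℝ) ≤ A * ε ^ (2 * n₁) := by positivity
        gcongr
      refine hstep.trans (le_of_eq ?_)
      have eC : C ^ ((n:ℝ)) = C ^ n := Real.rpow_natCast C n
      have eχ : χ ^ (2 * ((n:ℝ) * ((n:ℝ) - 1))) = χ ^ (2 * n * (n - 1)) := by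
        rw [← Real.rpow_natCast χ (2 * n * (n-1))]
        congr 1
        push_cast [Nat.cast_sub (le_trans (by norm_num : 1 ≤ 2) hn)]
        ring
      have eε : ε ^ (-(2 * (n₁:ℝ))) * ε ^ (2 * n₁) = 1 := by
        rw [← Real.rpow_natCast ε (2 * n₁), ← Real.rpow_add hε0]
        push_cast
        simp
      rw [eC, eχ, hBdef]
      calc C ^ n * ε ^ (-(2 * (n₁:ℝ))) * χ ^ (2 * n * (n - 1)) * (A * ε ^ (2 * n₁))
          = C ^ n * χ ^ (2 * n * (n - 1)) * A * (ε ^ (-(2 * (n₁:ℝ))) * ε ^ (2 * n₁)) := by ring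
        _ = C ^ n * χ ^ (2 * n * (n - 1)) * A := by rw [eε, mul_one]
    have h := (key m).trans hbd
    have h4 := Real.rpow_le_rpow (Real.rpow_nonneg hInn _) h hkpos.le
    rwa [← Real.rpow_mul hInn, one_div, inv_mul_cancel₀ (ne_of_gt hkpos),
      Real.rpow_one] at h4
  -- conclude
  by_cases hbdd : ∃ M : ℝ, ∀ᵐ x ∂ν, u x ≤ M
  · obtain ⟨M, hM⟩ := hbdd
    have hae : ∀ δ : ℝ, 0 < δ → ∀ᵐ x ∂ν, u x ≤ B + δ := by
      intro δ hδ
      set c : ℝ := B + δ with hcdef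
      have hc0 : 0 < c := by rw [hcdef]; linarith
      have hcB : B < c := by rw [hcdef]; linarith
      have hmeasS : MeasurableSet {x | c < u x} := measurableSet_lt measurable_const hu
      have hSnull : ν {x | c < u x} = 0 := by
        by_contra hne
        have ht : 0 < (ν {x | c < u x}).toReal :=
          ENNReal.toReal_pos hne (measure_ne_top ν _)
        set t := (ν {x | c < u x}).toReal with htdef
        have hq1 : 1 < c / B := (one_lt_div hBpos).mpr hcB
        have hb : ∀ m : ℕ, (c / B) ^ ((χ:ℝ) ^ m) ≤ 1 / t := by
          intro m
          have hkpos : 0 < χ ^ m := pow_pos hχ0 m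
          have hmeasp : Measurable fun x => u x ^ (χ ^ m) :=
            (Real.continuous_rpow_const hkpos.le).measurable.comp hu
          have hint : Integrable (fun x => u x ^ (χ ^ m)) ν := by
            refine Integrable.mono' (integrable_const ((max M 0) ^ ((χ:ℝ) ^ m)))
              hmeasp.aestronglyMeasurable ?_
            filter_upwards [hM] with x' hx'
            rw [Real.norm_eq_abs, abs_of_nonneg (Real.rpow_nonneg (hu0 x') _)]
            exact Real.rpow_le_rpow (hu0 x') (hx'.trans (le_max_left M 0)) hkpos.le
          have hlow : c ^ ((χ:ℝ) ^ m) * t ≤ ∫ x in {x | c < u x}, u x ^ (χ ^ m) ∂ν :=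
            setIntegral_ge_of_const_le_real hmeasS (measure_ne_top ν _)
              (fun x' hx' => Real.rpow_le_rpow hc0.le (le_of_lt hx') hkpos.le)
              hint.integrableOn
          have hup : ∫ x in {x | c < u x}, u x ^ (χ ^ m) ∂ν ≤ ∫ x, u x ^ (χ ^ m) ∂ν :=
            setIntegral_le_integral hint
              (Eventually.of_forall fun x' => Real.rpow_nonneg (hu0 x') _)
          have hcomb : c ^ ((χ:ℝ) ^ m) * t ≤ B ^ ((χ:ℝ) ^ m) :=
            hlow.trans (hup.trans (key2 m))
          rw [Real.div_rpow hc0.le hBpos.le,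
            div_le_div_iff₀ (Real.rpow_pos_of_pos hBpos _) ht]
          linarith
        have htend : Tendsto (fun m : ℕ => (c/B) ^ ((χ:ℝ) ^ m)) atTop atTop := by
          have h1 : Tendsto (fun p : ℝ => (c/B) ^ p) atTop atTop := by
            simp_rw [Real.rpow_def_of_pos (div_pos hc0 hBpos)]
            exact Real.tendsto_exp_atTop.comp
              (tendsto_id.const_mul_atTop (Real.log_pos hq1))
          exact h1.comp (tendsto_pow_atTop_atTop_of_one_lt hχ1)
        obtain ⟨m, hm⟩ := (htend.eventually_ge_atTop (1/t + 1)).exists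
        have := hb m
        linarith
      rw [ae_iff]
      simpa [not_le] using hSnull
    have haeB : ∀ᵐ x ∂ν, u x ≤ B := by
      have h1 : ∀ᵐ x ∂ν, ∀ k : ℕ, u x ≤ B + 1/(k+1) :=
        ae_all_iff.mpr fun k => hae (1/(k+1)) (by positivity)
      filter_upwards [h1] with x' hx'
      by_contra hgt
      push_neg at hgt
      obtain ⟨k, hk⟩ := exists_nat_one_div_lt (by linarith : (0:ℝ) < u x' - B)
      have := hx' k
      linarith
    have hνne : ν ≠ 0 := by intro h; rw [h] at hpos; simp at hpos
    have : (ae ν).NeBot := ae_neBot.mpr hνne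
    exact Filter.limsup_le_of_le (Filter.isCoboundedUnder_le_of_le _ fun x' => hu0 x') haeB
  · push_neg at hbdd
    have hempty : {a : ℝ | ∀ᶠ x in ae ν, u x ≤ a} = ∅ := by
      ext a
      simp only [Set.mem_setOf_eq, Set.mem_empty_iff_false, iff_false]
      exact fun h => hbdd a (h.mono fun x hx => not_lt.mpr hx)
    have heq : essSup u ν = sInf {a : ℝ | ∀ᶠ x in ae ν, u x ≤ a} :=
      Filter.limsup_eq
    rw [heq, hempty, Real.sInf_empty]
    exact hBpos.le
end

section
/- Let (X, 𝔪) be a measure space with V := 𝔪(X) satisfying 0 < V < ∞, and let C₀ > 1, C ≥ 0, and 0 < A ≤ 1 be constants. Let f : X → [0,∞) be measurable with f ∈ L²(𝔪), and suppose: (i) ∫_X f² d𝔪 ≤ (1/V)(∫_X f d𝔪)² + C ∫_X f d𝔪; and (ii) there is a measurable set U ⊆ X with 𝔪(U) ≥ V/C₀ and f ≤ 2/A 𝔪-almost everywhere on U. Then ∫_X f d𝔪 ≤ (C₀²C + 2C₀√(1+C₀)) · V / A. -/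
set_option maxHeartbeats 1000000


open MeasureTheory

/-- The L¹ estimate in the supremum part of the C⁰ bound: if a nonnegative
`L²` function satisfies the Poincaré-type reverse inequality (i) and is
bounded by `2/A` on a set of measure at least `V/C₀`, then
`∫ f ≤ (C₀²C + 2C₀√(1+C₀)) V / A`. -/
theorem L1_estimate_from_poincare
    {X : Type*} [MeasurableSpace X] (𝔪 : Measure X) (V C₀ C A : ℝ)
    (hV : V = (𝔪 Set.univ).toReal) (hVpos : 0 < 𝔪 Set.univ)
    (hVfin : 𝔪 Set.univ < ⊤)
    (hC₀ : 1 < C₀) (hC : 0 ≤ C) (hA0 : 0 < A) (hA1 : A ≤ 1)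
    (f : X → ℝ) (hf : Measurable f) (hf0 : ∀ x, 0 ≤ f x)
    (hfL2 : MemLp f 2 𝔪)
    (hi : ∫ x, f x ^ 2 ∂𝔪 ≤ (1 / V) * (∫ x, f x ∂𝔪) ^ 2 + C * ∫ x, f x ∂𝔪)
    (hii : ∃ U : Set X, MeasurableSet U ∧ ENNReal.ofReal (V / C₀) ≤ 𝔪 U ∧
      ∀ᵐ x ∂𝔪, x ∈ U → f x ≤ 2 / A) :
    ∫ x, f x ∂𝔪 ≤ (C₀ ^ 2 * C + 2 * C₀ * Real.sqrt (1 + C₀)) * V / A := by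
  classical
  haveI : IsFiniteMeasure 𝔪 := ⟨hVfin⟩
  obtain ⟨U, hU, hUm, hUb⟩ := hii
  set I := ∫ x, f x ∂𝔪 with hIdef
  set J := ∫ x, f x ^ 2 ∂𝔪 with hJdef
  have hVpos' : 0 < V := by rw [hV]; exact ENNReal.toReal_pos hVpos.ne' hVfin.ne
  have hC₀0 : (0:ℝ) < C₀ := lt_trans one_pos hC₀
  have hfi : Integrable f 𝔪 := hfL2.integrable one_le_two
  have hf2i : Integrable (fun x => f x ^ 2) 𝔪 := hfL2.integrable_sq
  have hI0 : 0 ≤ I := integral_nonneg hf0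
  have hJ0 : 0 ≤ J := integral_nonneg fun x => sq_nonneg _
  have hUfin : 𝔪 U ≠ ⊤ := (lt_of_le_of_lt (measure_mono (Set.subset_univ U)) hVfin).ne
  have hcfin : 𝔪 Uᶜ ≠ ⊤ := (lt_of_le_of_lt (measure_mono (Set.subset_univ _)) hVfin).ne
  have hμU : V / C₀ ≤ (𝔪 U).toReal :=
    (ENNReal.ofReal_le_iff_le_toReal hUfin).1 hUm
  have hadd : (𝔪 U).toReal + (𝔪 Uᶜ).toReal = V := by
    rw [hV, ← ENNReal.toReal_add hUfin hcfin, measure_add_measure_compl hU]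
  have hμc : (𝔪 Uᶜ).toReal ≤ V * (1 - 1/C₀) := by
    have : V * (1 - 1/C₀) = V - V / C₀ := by field_simp
    linarith
  -- Part A : integral over U
  have hA2 : (0:ℝ) < 2 / A := by positivity
  have hUint : ∫ x in U, f x ∂𝔪 ≤ 2 / A * V := by
    have h1 : ∫ x in U, f x ∂𝔪 ≤ ∫ x in U, (2/A) ∂𝔪 :=
      integral_mono_ae hfi.restrict (integrable_const _) ((ae_restrict_iff' hU).2 hUb)
    rw [setIntegral_const, smul_eq_mul] at h1
    have h2 : (𝔪 U).toReal ≤ V := by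
      rw [hV]; exact ENNReal.toReal_mono hVfin.ne (measure_mono (Set.subset_univ U))
    calc ∫ x in U, f x ∂𝔪 ≤ (𝔪 U).toReal * (2/A) := h1
      _ ≤ V * (2/A) := by gcongr
      _ = 2/A * V := mul_comm _ _
  -- Part B : Cauchy–Schwarz on the complement
  have hconj : (2:ℝ).HolderConjugate 2 := Real.HolderConjugate.two_two
  have hOf2 : ENNReal.ofReal (2:ℝ) = 2 := by norm_num
  have hfc : MemLp f (ENNReal.ofReal (2:ℝ)) (𝔪.restrict Uᶜ) := by
    rw [hOf2]; exact hfL2.restrict _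
  have honec : MemLp (fun _ : X => (1:ℝ)) (ENNReal.ofReal (2:ℝ)) (𝔪.restrict Uᶜ) :=
    memLp_const 1
  have hholder := integral_mul_le_Lp_mul_Lq_of_nonneg hconj
    (Filter.Eventually.of_forall hf0) (Filter.Eventually.of_forall fun _ => zero_le_one)
    hfc honec
  have hB : ∫ x in Uᶜ, f x ∂𝔪 ≤
      Real.sqrt (∫ x in Uᶜ, f x ^ 2 ∂𝔪) * Real.sqrt ((𝔪 Uᶜ).toReal) := by
    have e1 : ∀ x : X, f x * (1:ℝ) = f x := fun x => mul_one _
    have e2 : ∀ x : X, f x ^ (2:ℝ) = f x ^ 2 := fun x => by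
      rw [show (2:ℝ) = ((2:ℕ):ℝ) by norm_num, Real.rpow_natCast]
    simp only [e1, e2] at hholder
    rw [integral_const, measureReal_restrict_apply_univ, measureReal_def, smul_eq_mul, Real.one_rpow,
      mul_one] at hholder
    rw [Real.sqrt_eq_rpow, Real.sqrt_eq_rpow]
    exact hholder
  have hJc : ∫ x in Uᶜ, f x ^ 2 ∂𝔪 ≤ J :=
    setIntegral_le_integral hf2i (Filter.Eventually.of_forall fun x => sq_nonneg _)
  have hJc0 : 0 ≤ ∫ x in Uᶜ, f x ^ 2 ∂𝔪 :=
    integral_nonneg fun x => sq_nonneg _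
  have hB2 : ∫ x in Uᶜ, f x ∂𝔪 ≤ Real.sqrt J * Real.sqrt (V * (1 - 1/C₀)) :=
    le_trans hB (mul_le_mul (Real.sqrt_le_sqrt hJc) (Real.sqrt_le_sqrt hμc)
      (Real.sqrt_nonneg _) (Real.sqrt_nonneg _))
  -- combine with hypothesis (i)
  have hVJ : Real.sqrt (V * J) ≤ I + C * V / 2 := by
    have h1 : V * J ≤ I ^ 2 + C * V * I := by
      have := mul_le_mul_of_nonneg_left hi hVpos'.le
      have hne : V ≠ 0 := hVpos'.ne'
      calc V * J ≤ V * ((1/V) * I ^ 2 + C * I) := this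
        _ = I ^ 2 + C * V * I := by field_simp
    have h2 : I ^ 2 + C * V * I ≤ (I + C * V / 2) ^ 2 := by nlinarith [sq_nonneg (C * V)]
    calc Real.sqrt (V * J) ≤ Real.sqrt ((I + C * V / 2) ^ 2) :=
          Real.sqrt_le_sqrt (le_trans h1 h2)
      _ = I + C * V / 2 := Real.sqrt_sq (by positivity)
  set s := Real.sqrt (1 - 1/C₀) with hsdef
  set r := Real.sqrt (1 + C₀) with hrdef
  have hθ0 : (0:ℝ) ≤ 1 - 1/C₀ := by
    have : 1/C₀ ≤ 1 := by rw [div_le_one hC₀0]; linarith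
    linarith
  have hs0 : 0 ≤ s := Real.sqrt_nonneg _
  have hs2 : s ^ 2 = 1 - 1/C₀ := Real.sq_sqrt hθ0
  have hr0 : 0 ≤ r := Real.sqrt_nonneg _
  have hr2 : r ^ 2 = 1 + C₀ := Real.sq_sqrt (by linarith)
  have hiC : 0 < 1/C₀ := by positivity
  have hsqC : s ^ 2 * C₀ = C₀ - 1 := by
    rw [hs2]; field_simp
  have hs1 : s < 1 := by nlinarith [hs2, hs0, hiC, sq_nonneg (s - 1)]
  have hmain : I ≤ 2/A * V + s * (I + C * V / 2) := by
    have hsplit : I = (∫ x in U, f x ∂𝔪) + ∫ x in Uᶜ, f x ∂𝔪 :=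
      (integral_add_compl hU hfi).symm
    have hstep : Real.sqrt J * Real.sqrt (V * (1 - 1/C₀)) ≤ s * (I + C * V / 2) := by
      have e : Real.sqrt J * Real.sqrt (V * (1 - 1/C₀)) = s * Real.sqrt (V * J) := by
        rw [Real.sqrt_mul hVpos'.le, Real.sqrt_mul hVpos'.le, ← hsdef]
        ring
      rw [e]
      exact mul_le_mul_of_nonneg_left hVJ hs0
    linarith [hUint, le_trans hB2 hstep, hsplit.le, hsplit.ge]
  -- conjugate-exponent arithmetic
  have hsr : 1 + s ≤ r := by
    have h1 : (1 + s) ^ 2 ≤ 1 + C₀ := by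
      have hsq4 : (2*s*C₀) ^ 2 = 4*(C₀-1)*C₀ := by
        have : (2*s*C₀) ^ 2 = 4*(s^2*C₀)*C₀ := by ring
        rw [this, hsqC]
      have key : 2 * s * C₀ ≤ C₀ ^ 2 - C₀ + 1 := by
        nlinarith [hsq4, sq_nonneg (C₀^2 - C₀ - 1), mul_nonneg (mul_nonneg hs0 hC₀0.le) hC₀0.le, hC₀0, hC₀]
      nlinarith [hsqC, key, hC₀0]
    calc 1 + s = Real.sqrt ((1 + s) ^ 2) := (Real.sqrt_sq (by linarith)).symm
      _ ≤ r := Real.sqrt_le_sqrt h1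
  have hid : (1 - s) * (C₀ * (1 + s)) = 1 := by
    have h1 : 1 - s ^ 2 = 1 / C₀ := by linarith [hs2]
    have : (1 - s) * (C₀ * (1 + s)) = C₀ * (1 - s ^ 2) := by ring
    rw [this, h1]
    field_simp
  clear_value s r
  clear hUb hholder hB hB2 hJc hJc0 hUint hfc honec hconj hμU hμc hadd hUm hi hVJ hθ0 hOf2 hUfin hcfin hU hfi hf2i
  clear_value I J
  rw [le_div_iff₀ hA0]
  have hfac : I * (1 - s) ≤ 2/A * V + s * (C * V / 2) := by nlinarith [hmain]
  have hchain : I ≤ (2/A * V + s * (C * V / 2)) * (C₀ * (1 + s)) := by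
    have hpos : 0 ≤ C₀ * (1 + s) := by positivity
    calc I = I * ((1 - s) * (C₀ * (1 + s))) := by rw [hid, mul_one]
      _ = I * (1 - s) * (C₀ * (1 + s)) := by ring
      _ ≤ (2/A * V + s * (C * V / 2)) * (C₀ * (1 + s)) :=
          mul_le_mul_of_nonneg_right hfac hpos
  have hIA : I * A ≤ (2/A * V + s * (C * V / 2)) * (C₀ * (1 + s)) * A :=
    mul_le_mul_of_nonneg_right hchain hA0.le
  have hexp : (2/A * V + s * (C * V / 2)) * (C₀ * (1 + s)) * A
      = 2 * V * (C₀ * (1 + s)) + s * C * V * (C₀ * (1 + s)) * A / 2 := by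
    field_simp
  rw [hexp] at hIA
  have hb1 : 2 * V * (C₀ * (1 + s)) ≤ 2 * C₀ * r * V := by
    have := mul_le_mul_of_nonneg_left hsr (show (0:ℝ) ≤ 2 * V * C₀ by positivity)
    nlinarith [this]
  have hb2 : s * C * V * (C₀ * (1 + s)) * A / 2 ≤ C₀ ^ 2 * C * V := by
    have e1 : s * (1 + s) * A ≤ 2 := by
      nlinarith [hs0, hs1.le, hA1, hA0.le, mul_nonneg hs0 hA0.le,
        mul_nonneg (mul_nonneg hs0 hs0) hA0.le]
    have e2 : (C * V * C₀ / 2) * (s * (1 + s) * A) ≤ (C * V * C₀ / 2) * 2 :=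
      mul_le_mul_of_nonneg_left e1 (by positivity)
    have e3 : 0 ≤ C * V * (C₀ ^ 2 - C₀) :=
      mul_nonneg (mul_nonneg hC hVpos'.le) (by nlinarith [hC₀, hC₀0])
    nlinarith [e2, e3]
  linarith [hIA, hb1, hb2]
end

section
/- Let (X, 𝔪) be a measure space, let φ : X → ℝ and h : X → [0,∞) be measurable, and let C > 0, 0 < δ ≤ 1 and a real number k ≥ 2 be constants. Assume e^{−φ} ≤ δ 𝔪-almost everywhere, that e^{−(k−1)φ} and e^{−(k−1)φ} h² are integrable, and that ∫_X e^{−(k−1)φ} h² d𝔪 ≤ C ∫_X ( e^{−(k+1)φ} h + e^{−kφ} ) d𝔪. Then ∫_X e^{−(k−1)φ} h² d𝔪 ≤ (C² δ⁴ + 2Cδ) ∫_X e^{−(k−1)φ} d𝔪. -/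
open MeasureTheory Real

/-- Weighted Cauchy–Schwarz absorption in the infimum estimate: if
`e^{-φ} ≤ δ` a.e. and
`∫ e^{-(k-1)φ} h² ≤ C ∫ (e^{-(k+1)φ} h + e^{-kφ})`, then
`∫ e^{-(k-1)φ} h² ≤ (C²δ⁴ + 2Cδ) ∫ e^{-(k-1)φ}`. -/
theorem weighted_absorption_infimum
    {X : Type*} [MeasurableSpace X] (𝔪 : Measure X)
    (φ h : X → ℝ) (hφm : Measurable φ) (hhm : Measurable h)
    (hh0 : ∀ x, 0 ≤ h x)
    (C δ k : ℝ) (hC : 0 < C) (hδ0 : 0 < δ) (hδ1 : δ ≤ 1) (hk : 2 ≤ k)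
    (hbd : ∀ᵐ x ∂𝔪, Real.exp (-φ x) ≤ δ)
    (hint1 : Integrable (fun x => Real.exp (-(k - 1) * φ x)) 𝔪)
    (hint2 : Integrable (fun x => Real.exp (-(k - 1) * φ x) * h x ^ 2) 𝔪)
    (hmain : ∫ x, Real.exp (-(k - 1) * φ x) * h x ^ 2 ∂𝔪 ≤
      C * ∫ x, (Real.exp (-(k + 1) * φ x) * h x + Real.exp (-k * φ x)) ∂𝔪) :
    ∫ x, Real.exp (-(k - 1) * φ x) * h x ^ 2 ∂𝔪 ≤
      (C ^ 2 * δ ^ 4 + 2 * C * δ) * ∫ x, Real.exp (-(k - 1) * φ x) ∂𝔪 := by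
  set I := ∫ x, Real.exp (-(k - 1) * φ x) * h x ^ 2 ∂𝔪 with hI
  set J := ∫ x, Real.exp (-(k - 1) * φ x) ∂𝔪 with hJ
  have hJ0 : 0 ≤ J := integral_nonneg fun x => (Real.exp_pos _).le
  -- pointwise a.e. bound
  have key : ∫ x, (Real.exp (-(k + 1) * φ x) * h x + Real.exp (-k * φ x)) ∂𝔪 ≤
      (1 / (2 * C)) * I + (C * δ ^ 4 / 2 + δ) * J := by
    have hg : Integrable (fun x => (1 / (2 * C)) * (Real.exp (-(k - 1) * φ x) * h x ^ 2)
        + (C * δ ^ 4 / 2 + δ) * Real.exp (-(k - 1) * φ x)) 𝔪 :=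
      (hint2.const_mul _).add (hint1.const_mul _)
    have hle : ∫ x, (Real.exp (-(k + 1) * φ x) * h x + Real.exp (-k * φ x)) ∂𝔪 ≤
        ∫ x, ((1 / (2 * C)) * (Real.exp (-(k - 1) * φ x) * h x ^ 2)
          + (C * δ ^ 4 / 2 + δ) * Real.exp (-(k - 1) * φ x)) ∂𝔪 := by
      refine integral_mono_of_nonneg ?_ hg ?_
      · filter_upwards with x
        have := hh0 x
        positivity
      · filter_upwards [hbd] with x hx
        set e := Real.exp (-φ x) with he
        set E := Real.exp (-(k - 1) * φ x) with hE
        have he0 : 0 ≤ e := (Real.exp_pos _).le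
        have hE0 : 0 < E := Real.exp_pos _
        have e1 : Real.exp (-(k + 1) * φ x) = E * e ^ 2 := by
          rw [he, hE, ← Real.exp_nat_mul, ← Real.exp_add]; ring_nf
        have e2 : Real.exp (-k * φ x) = E * e := by
          rw [he, hE, ← Real.exp_add]; ring_nf
        have h4 : e ^ 4 ≤ δ ^ 4 := pow_le_pow_left₀ he0 hx 4
        have hhx := hh0 x
        have core : e ^ 2 * h x + e ≤ (1 / (2 * C)) * h x ^ 2 + (C * δ ^ 4 / 2 + δ) := by
          have hrw : (1 / (2 * C)) * h x ^ 2 + (C * δ ^ 4 / 2 + δ)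
              = (h x ^ 2 + C ^ 2 * δ ^ 4 + 2 * C * δ) / (2 * C) := by
            field_simp; ring
          rw [hrw, le_div_iff₀ (by positivity : (0:ℝ) < 2 * C)]
          nlinarith [sq_nonneg (h x - C * e ^ 2), sq_nonneg e]
        calc Real.exp (-(k + 1) * φ x) * h x + Real.exp (-k * φ x)
            = E * (e ^ 2 * h x + e) := by rw [e1, e2]; ring
          _ ≤ E * ((1 / (2 * C)) * h x ^ 2 + (C * δ ^ 4 / 2 + δ)) := by
              exact mul_le_mul_of_nonneg_left core hE0.le
          _ = (1 / (2 * C)) * (E * h x ^ 2) + (C * δ ^ 4 / 2 + δ) * E := by ring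
    calc ∫ x, (Real.exp (-(k + 1) * φ x) * h x + Real.exp (-k * φ x)) ∂𝔪
        ≤ ∫ x, ((1 / (2 * C)) * (Real.exp (-(k - 1) * φ x) * h x ^ 2)
          + (C * δ ^ 4 / 2 + δ) * Real.exp (-(k - 1) * φ x)) ∂𝔪 := hle
      _ = (1 / (2 * C)) * I + (C * δ ^ 4 / 2 + δ) * J := by
          rw [integral_add (hint2.const_mul _) (hint1.const_mul _),
            MeasureTheory.integral_const_mul, MeasureTheory.integral_const_mul]
  have step : I ≤ C * ((1 / (2 * C)) * I + (C * δ ^ 4 / 2 + δ) * J) :=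
    hmain.trans (mul_le_mul_of_nonneg_left key hC.le)
  have hC' : C * (1 / (2 * C)) = 1 / 2 := by
    field_simp
  have step2 : I ≤ I / 2 + (C ^ 2 * δ ^ 4 / 2 + C * δ) * J := by
    calc I ≤ C * ((1 / (2 * C)) * I + (C * δ ^ 4 / 2 + δ) * J) := step
      _ = (C * (1 / (2 * C))) * I + (C ^ 2 * δ ^ 4 / 2 + C * δ) * J := by ring
      _ = I / 2 + (C ^ 2 * δ ^ 4 / 2 + C * δ) * J := by rw [hC']; ring
  linarith
end

section
/- Let (X, 𝔪) be a measure space, let φ : X → ℝ and h : X → [0,∞) be measurable, and let C > 0, 0 < δ ≤ 1 and a real number k ≥ 1 be constants. Assume e^{−φ} ≤ δ 𝔪-almost everywhere, that e^{kφ} and e^{(k+1)φ} h² are integrable, and that ∫_X e^{(k+1)φ} h² d𝔪 ≤ C ∫_X ( e^{(k−1)φ} h + e^{kφ} ) d𝔪. Then ∫_X e^{(k+1)φ} h² d𝔪 ≤ (C² δ³ + 2C) ∫_X e^{kφ} d𝔪, and consequently ∫_X e^{kφ} h² d𝔪 ≤ δ (C² δ³ + 2C) ∫_X e^{kφ} d𝔪.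 -/
open MeasureTheory Real

/-- Pointwise AM–GM with weight absorption: for `exp(-θ) ≤ δ`,
`c·e^{(k-1)θ}t ≤ ½ e^{(k+1)θ}t² + (c²δ³/2) e^{kθ}`. -/
lemma aux_amgm (c δ k θ t : ℝ) (hδ : Real.exp (-θ) ≤ δ) :
    c * (Real.exp ((k - 1) * θ) * t) ≤
      (1 / 2) * (Real.exp ((k + 1) * θ) * t ^ 2) + (c ^ 2 * δ ^ 3 / 2) * Real.exp (k * θ) := by
  set a := Real.exp (((k + 1) / 2) * θ) * t with ha
  set b := c * Real.exp (((k - 3) / 2) * θ) with hb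
  have e1 : Real.exp (((k + 1) / 2) * θ) * Real.exp (((k - 3) / 2) * θ)
      = Real.exp ((k - 1) * θ) := by rw [← Real.exp_add]; ring_nf
  have e2 : Real.exp (((k + 1) / 2) * θ) ^ 2 = Real.exp ((k + 1) * θ) := by
    rw [sq, ← Real.exp_add]; ring_nf
  have e3 : Real.exp (((k - 3) / 2) * θ) ^ 2 = Real.exp ((k - 3) * θ) := by
    rw [sq, ← Real.exp_add]; ring_nf
  have e4 : Real.exp ((k - 3) * θ) ≤ δ ^ 3 * Real.exp (k * θ) := by
    have h1 : Real.exp ((k - 3) * θ) = Real.exp (-θ) ^ 3 * Real.exp (k * θ) := by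
      have h2 : Real.exp (-θ) ^ 3 = Real.exp ((3 : ℕ) * (-θ)) := (Real.exp_nat_mul _ 3).symm
      rw [h2, ← Real.exp_add]; ring_nf
    rw [h1]
    exact mul_le_mul_of_nonneg_right (pow_le_pow_left₀ (Real.exp_nonneg _) hδ 3)
      (Real.exp_nonneg _)
  have hab : a * b = c * (Real.exp ((k - 1) * θ) * t) := by
    rw [ha, hb]
    calc Real.exp (((k+1)/2)*θ) * t * (c * Real.exp (((k-3)/2)*θ))
        = c * ((Real.exp (((k+1)/2)*θ) * Real.exp (((k-3)/2)*θ)) * t) := by ring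
      _ = c * (Real.exp ((k-1)*θ) * t) := by rw [e1]
  have h2ab := two_mul_le_add_sq a b
  have ha2 : a ^ 2 = Real.exp ((k + 1) * θ) * t ^ 2 := by rw [ha, mul_pow, e2]
  have hb2 : b ^ 2 = c ^ 2 * Real.exp ((k - 3) * θ) := by rw [hb, mul_pow, e3]
  have e5 : c ^ 2 * Real.exp ((k - 3) * θ) ≤ c ^ 2 * (δ ^ 3 * Real.exp (k * θ)) :=
    mul_le_mul_of_nonneg_left e4 (sq_nonneg c)
  nlinarith [h2ab, hab, ha2, hb2, e5]

/-- Weighted Cauchy–Schwarz absorption in the supremum estimate: if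
`e^{-φ} ≤ δ` a.e. and
`∫ e^{(k+1)φ} h² ≤ C ∫ (e^{(k-1)φ} h + e^{kφ})`, then
`∫ e^{(k+1)φ} h² ≤ (C²δ³ + 2C) ∫ e^{kφ}` and
`∫ e^{kφ} h² ≤ δ(C²δ³ + 2C) ∫ e^{kφ}`. -/
theorem weighted_absorption_supremum
    {X : Type*} [MeasurableSpace X] (𝔪 : Measure X)
    (φ h : X → ℝ) (hφm : Measurable φ) (hhm : Measurable h)
    (hh0 : ∀ x, 0 ≤ h x)
    (C δ k : ℝ) (hC : 0 < C) (hδ0 : 0 < δ) (hδ1 : δ ≤ 1) (hk : 1 ≤ k)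
    (hbd : ∀ᵐ x ∂𝔪, Real.exp (-φ x) ≤ δ)
    (hint1 : Integrable (fun x => Real.exp (k * φ x)) 𝔪)
    (hint2 : Integrable (fun x => Real.exp ((k + 1) * φ x) * h x ^ 2) 𝔪)
    (hmain : ∫ x, Real.exp ((k + 1) * φ x) * h x ^ 2 ∂𝔪 ≤
      C * ∫ x, (Real.exp ((k - 1) * φ x) * h x + Real.exp (k * φ x)) ∂𝔪) :
    (∫ x, Real.exp ((k + 1) * φ x) * h x ^ 2 ∂𝔪 ≤
        (C ^ 2 * δ ^ 3 + 2 * C) * ∫ x, Real.exp (k * φ x) ∂𝔪) ∧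
      ∫ x, Real.exp (k * φ x) * h x ^ 2 ∂𝔪 ≤
        δ * (C ^ 2 * δ ^ 3 + 2 * C) * ∫ x, Real.exp (k * φ x) ∂𝔪 := by
  -- Integrability of f := e^{(k-1)φ} h via the pointwise bound with c = 1
  have hfmeas : AEStronglyMeasurable (fun x => Real.exp ((k - 1) * φ x) * h x) 𝔪 :=
    ((hφm.const_mul (k - 1)).exp.mul hhm).aestronglyMeasurable
  have hbound1 : Integrable
      (fun x => (1 / 2) * (Real.exp ((k + 1) * φ x) * h x ^ 2)
        + ((1:ℝ) ^ 2 * δ ^ 3 / 2) * Real.exp (k * φ x)) 𝔪 :=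
    (hint2.const_mul _).add (hint1.const_mul _)
  have hf_int : Integrable (fun x => Real.exp ((k - 1) * φ x) * h x) 𝔪 := by
    refine hbound1.mono' hfmeas ?_
    filter_upwards [hbd] with x hx
    have := aux_amgm 1 δ k (φ x) (h x) hx
    rw [one_mul] at this
    have hnn : 0 ≤ Real.exp ((k - 1) * φ x) * h x :=
      mul_nonneg (Real.exp_nonneg _) (hh0 x)
    rw [Real.norm_eq_abs, abs_of_nonneg hnn]
    exact this
  have hfg_int : Integrable
      (fun x => Real.exp ((k - 1) * φ x) * h x + Real.exp (k * φ x)) 𝔪 :=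
    hf_int.add hint1
  -- main estimate
  have hstep : C * ∫ x, (Real.exp ((k - 1) * φ x) * h x + Real.exp (k * φ x)) ∂𝔪 ≤
      (1 / 2) * (∫ x, Real.exp ((k + 1) * φ x) * h x ^ 2 ∂𝔪)
        + (C ^ 2 * δ ^ 3 / 2 + C) * ∫ x, Real.exp (k * φ x) ∂𝔪 := by
    rw [← integral_const_mul]
    have hrhs : Integrable
        (fun x => (1 / 2) * (Real.exp ((k + 1) * φ x) * h x ^ 2)
          + (C ^ 2 * δ ^ 3 / 2 + C) * Real.exp (k * φ x)) 𝔪 :=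
      (hint2.const_mul _).add (hint1.const_mul _)
    have hmono : ∫ x, C * (Real.exp ((k - 1) * φ x) * h x + Real.exp (k * φ x)) ∂𝔪 ≤
        ∫ x, ((1 / 2) * (Real.exp ((k + 1) * φ x) * h x ^ 2)
          + (C ^ 2 * δ ^ 3 / 2 + C) * Real.exp (k * φ x)) ∂𝔪 := by
      refine integral_mono_ae (hfg_int.const_mul C) hrhs ?_
      filter_upwards [hbd] with x hx
      have := aux_amgm C δ k (φ x) (h x) hx
      have hg0 : (0:ℝ) ≤ Real.exp (k * φ x) := Real.exp_nonneg _
      nlinarith [this]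
    calc ∫ x, C * (Real.exp ((k - 1) * φ x) * h x + Real.exp (k * φ x)) ∂𝔪
        ≤ ∫ x, ((1 / 2) * (Real.exp ((k + 1) * φ x) * h x ^ 2)
            + (C ^ 2 * δ ^ 3 / 2 + C) * Real.exp (k * φ x)) ∂𝔪 := hmono
      _ = (1 / 2) * (∫ x, Real.exp ((k + 1) * φ x) * h x ^ 2 ∂𝔪)
            + (C ^ 2 * δ ^ 3 / 2 + C) * ∫ x, Real.exp (k * φ x) ∂𝔪 := by
          rw [integral_add (hint2.const_mul _) (hint1.const_mul _),
            integral_const_mul, integral_const_mul]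
  have part1 : ∫ x, Real.exp ((k + 1) * φ x) * h x ^ 2 ∂𝔪 ≤
      (C ^ 2 * δ ^ 3 + 2 * C) * ∫ x, Real.exp (k * φ x) ∂𝔪 := by
    have := hmain.trans hstep
    linarith
  refine ⟨part1, ?_⟩
  -- second estimate
  have hpt2 : ∀ᵐ x ∂𝔪, Real.exp (k * φ x) * h x ^ 2 ≤
      δ * (Real.exp ((k + 1) * φ x) * h x ^ 2) := by
    filter_upwards [hbd] with x hx
    have heq : Real.exp (k * φ x) = Real.exp (-φ x) * Real.exp ((k + 1) * φ x) := by
      rw [← Real.exp_add]; ring_nf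
    have hsq : (0:ℝ) ≤ h x ^ 2 := sq_nonneg _
    calc Real.exp (k * φ x) * h x ^ 2
        = Real.exp (-φ x) * (Real.exp ((k + 1) * φ x) * h x ^ 2) := by rw [heq]; ring
      _ ≤ δ * (Real.exp ((k + 1) * φ x) * h x ^ 2) :=
          mul_le_mul_of_nonneg_right hx (mul_nonneg (Real.exp_nonneg _) hsq)
  have hf2_int : Integrable (fun x => Real.exp (k * φ x) * h x ^ 2) 𝔪 := by
    refine (hint2.const_mul δ).mono'
      (((hφm.const_mul k).exp.mul (hhm.pow_const 2)).aestronglyMeasurable) ?_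
    filter_upwards [hpt2] with x hx
    rw [Real.norm_eq_abs, abs_of_nonneg (mul_nonneg (Real.exp_nonneg _) (sq_nonneg _))]
    exact hx
  have hA0 : 0 ≤ ∫ x, Real.exp ((k + 1) * φ x) * h x ^ 2 ∂𝔪 :=
    integral_nonneg fun x => mul_nonneg (Real.exp_nonneg _) (sq_nonneg _)
  calc ∫ x, Real.exp (k * φ x) * h x ^ 2 ∂𝔪
      ≤ ∫ x, δ * (Real.exp ((k + 1) * φ x) * h x ^ 2) ∂𝔪 :=
        integral_mono_ae hf2_int (hint2.const_mul δ) hpt2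
    _ = δ * ∫ x, Real.exp ((k + 1) * φ x) * h x ^ 2 ∂𝔪 := integral_const_mul _ _
    _ ≤ δ * ((C ^ 2 * δ ^ 3 + 2 * C) * ∫ x, Real.exp (k * φ x) ∂𝔪) :=
        mul_le_mul_of_nonneg_left part1 hδ0.le
    _ = δ * (C ^ 2 * δ ^ 3 + 2 * C) * ∫ x, Real.exp (k * φ x) ∂𝔪 := by ring
end
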